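/- Let K be an abstract simplicial complex on Fin m, let Z_K^ℍ ⊆ ℍ^m be the associated quaternionic moment–angle complex with its coordinatewise Q^m-action, and let H be a subgroup of Q^m. Then H acts freely on Z_K^ℍ (for all h ∈ Z_K^ℍ and q ∈ H, q • h = h implies q = 1) if and only if H ∩ Q_σ = {1} for every face σ ∈ K. (This freeness criterion underlies the correspondence, stated in Section 2.3.2 of the paper, between quoric manifolds over P and subgroups of Q^m acting freely on Z_P^ℍ.) -/

import Mathlib

open scoped Quaternion

/-- The unit quaternions `S³ = {q ∈ ℍ : ‖q‖ = 1}` act on `ℍ` by left multiplication. -/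
noncomputable instance unitSphereMulActionQuaternion :
    MulAction (Metric.sphere (0 : ℍ[ℝ]) 1) ℍ[ℝ] where
  smul q h := (q : ℍ[ℝ]) * h
  one_smul h := by
    show ((1 : Metric.sphere (0 : ℍ[ℝ]) 1) : ℍ[ℝ]) * h = h
    rw [Metric.unitSphere.coe_one, one_mul]
  mul_smul q q' h := by
    show ((q * q' : Metric.sphere (0 : ℍ[ℝ]) 1) : ℍ[ℝ]) * h
        = (q : ℍ[ℝ]) * ((q' : ℍ[ℝ]) * h)
    rw [Metric.unitSphere.coe_mul, mul_assoc]

/-- The coordinate subgroup `Q_σ = {q ∈ Q^m : qᵢ = 1 for all i ∉ σ}` of the quaternionic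
torus `Q^m = (S³)^m`. -/
noncomputable def quaternionicCoordSubgroup (m : ℕ) (σ : Finset (Fin m)) :
    Subgroup (Fin m → Metric.sphere (0 : ℍ[ℝ]) 1) where
  carrier := {q | ∀ i ∉ σ, q i = 1}
  one_mem' := fun _ _ => rfl
  mul_mem' := by
    intro a b ha hb i hi
    show a i * b i = 1
    rw [ha i hi, hb i hi, one_mul]
  inv_mem' := by
    intro a ha i hi
    show (a i)⁻¹ = 1
    rw [ha i hi, inv_one]

/-- freeness criterion underlying Section 2.3.2 of the paper. A subgroup
`H ≤ Q^m` acts freely on the quaternionic moment–angle complex `Z_K^ℍ` if and only if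
`H ∩ Q_σ = {1}` for every face `σ ∈ K`. -/
theorem free_action_on_quaternionic_moment_angle_complex_iff
    (m : ℕ) (K : Set (Finset (Fin m)))
    (Kdown : ∀ σ ∈ K, ∀ τ ⊆ σ, τ ∈ K) (Kempty : ∅ ∈ K)
    (H : Subgroup (Fin m → Metric.sphere (0 : ℍ[ℝ]) 1)) :
    (∀ h ∈ ⋃ σ ∈ K, {z : Fin m → ℍ[ℝ] | ∀ i, ‖z i‖ ≤ 1 ∧ (i ∉ σ → ‖z i‖ = 1)},
        ∀ q ∈ H, q • h = h → q = 1) ↔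
      ∀ σ ∈ K, H ⊓ quaternionicCoordSubgroup m σ = ⊥ := by

  constructor
  · intro hfree σ hσ
    rw [eq_bot_iff]
    intro q hq
    rw [Subgroup.mem_inf] at hq
    obtain ⟨hqH, hqσ⟩ := hq
    rw [Subgroup.mem_bot]
    set h : Fin m → ℍ[ℝ] := fun i => if i ∈ σ then 0 else 1 with hh
    apply hfree h _ q hqH
    · funext i
      show (q i : ℍ[ℝ]) * h i = h i
      by_cases hi : i ∈ σ
      · simp [hh, hi]
      · have := hqσ i hi
        simp [hh, hi, this]
    · refine Set.mem_iUnion.2 ⟨σ, Set.mem_iUnion.2 ⟨hσ, ?_⟩⟩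
      intro i
      by_cases hi : i ∈ σ <;> simp [hh, hi]
  · intro hb h hmem q hqH hqh
    obtain ⟨σ, hσK, hσ⟩ : ∃ σ ∈ K, ∀ i, ‖h i‖ ≤ 1 ∧ (i ∉ σ → ‖h i‖ = 1) := by
      simpa using hmem
    have hqσ : q ∈ quaternionicCoordSubgroup m σ := by
      intro i hi
      have h1 : ‖h i‖ = 1 := (hσ i).2 hi
      have hne : h i ≠ 0 := by
        intro h0; rw [h0, norm_zero] at h1; norm_num at h1
      have := congrFun hqh i
      have heq : (q i : ℍ[ℝ]) * h i = h i := this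
      have : (q i : ℍ[ℝ]) = 1 := by
        have := mul_right_cancel₀ hne (heq.trans (one_mul (h i)).symm)
        exact this
      exact Subtype.ext this
    have : q ∈ H ⊓ quaternionicCoordSubgroup m σ := Subgroup.mem_inf.2 ⟨hqH, hqσ⟩
    rw [hb σ hσK] at this
    exact Subgroup.mem_bot.1 this
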